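/- For the unit-weighted complete graph on N ≥ 3 vertices, the vector χ₁ = (1/√2)(1, -1, 0, ..., 0) is an eigenvector of L for eigenvalue N, its graph Fourier transform can be taken to be e₁, and |supp(χ₁)|·|supp(χ̂₁)| = 2 < N; hence the Donoho–Stark-type support inequality |supp(f)|·|supp(f̂)| ≥ N fails for the graph Fourier transform. -/

import Mathlib

open Matrix BigOperators

theorem complete_graph_support_failure (N : ℕ) (hN : 3 ≤ N) :
    (((N : ℝ) • (1 : Matrix (Fin N) (Fin N) ℝ) - Matrix.of fun _ _ => (1 : ℝ)) *ᵥ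
        (fun i : Fin N => if (i : ℕ) = 0 then 1 / Real.sqrt 2
          else if (i : ℕ) = 1 then -(1 / Real.sqrt 2) else 0)) =
      (N : ℝ) • (fun i : Fin N => if (i : ℕ) = 0 then 1 / Real.sqrt 2
          else if (i : ℕ) = 1 then -(1 / Real.sqrt 2) else 0) ∧
    (∃ (χ : Matrix (Fin N) (Fin N) ℝ) (lam : Fin N → ℝ),
      χᵀ * χ = 1 ∧
      χᵀ * ((N : ℝ) • (1 : Matrix (Fin N) (Fin N) ℝ) - Matrix.of fun _ _ => (1 : ℝ)) * χ =
        Matrix.diagonal lam ∧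
      χᵀ *ᵥ (fun i : Fin N => if (i : ℕ) = 0 then 1 / Real.sqrt 2
          else if (i : ℕ) = 1 then -(1 / Real.sqrt 2) else 0) =
        (fun i : Fin N => if (i : ℕ) = 1 then 1 else 0)) ∧
    (Function.support (fun i : Fin N => if (i : ℕ) = 0 then 1 / Real.sqrt 2
        else if (i : ℕ) = 1 then -(1 / Real.sqrt 2) else 0)).ncard *
      (Function.support (fun i : Fin N => if (i : ℕ) = 1 then (1 : ℝ) else 0)).ncard = 2 ∧
    2 < N := by
  have hN0 : (0:ℝ) < N := by exact_mod_cast Nat.lt_of_lt_of_le (by norm_num) hN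
  set i0 : Fin N := ⟨0, by omega⟩ with hi0
  set i1 : Fin N := ⟨1, by omega⟩ with hi1
  have hne : i0 ≠ i1 := by simp [hi0, hi1, Fin.ext_iff]
  set c : ℝ := 1 / Real.sqrt 2 with hc
  have hc0 : c ≠ 0 := by simp [hc]
  have hcc : c * c = 1 / 2 := by
    rw [hc, div_mul_div_comm, one_mul, Real.mul_self_sqrt (by norm_num : (0:ℝ) ≤ 2)]
  set v : Fin N → ℝ := fun i =>
      if (i : ℕ) = 0 then c else if (i : ℕ) = 1 then -c else 0 with hv
  have hvdef : ∀ i, v i = if i = i0 then c else if i = i1 then -c else 0 := by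
    intro i; simp [hv, hi0, hi1, Fin.ext_iff]
  -- generic two-point sum
  have hsum2 : ∀ x y : ℝ, (∑ j, (if j = i0 then x else if j = i1 then y else 0)) = x + y := by
    intro x y
    have key : ∀ j, (if j = i0 then x else if j = i1 then y else 0)
        = (if j = i0 then x else 0) + (if j = i1 then y else 0) := by
      intro j
      by_cases h0 : j = i0 <;> by_cases h1 : j = i1 <;> simp_all
    rw [Finset.sum_congr rfl fun j _ => key j, Finset.sum_add_distrib,
      Finset.sum_ite_eq' Finset.univ i0, Finset.sum_ite_eq' Finset.univ i1]
    simp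
  have hsumv : (∑ j, v j) = 0 := by
    rw [Finset.sum_congr rfl fun j _ => hvdef j, hsum2]; ring
  -- mulVec formula for L
  set L : Matrix (Fin N) (Fin N) ℝ :=
    (N : ℝ) • (1 : Matrix (Fin N) (Fin N) ℝ) - Matrix.of fun _ _ => (1 : ℝ) with hL
  have hmul : ∀ x : Fin N → ℝ, L *ᵥ x = fun i => (N : ℝ) * x i - ∑ j, x j := by
    intro x
    funext i
    simp [hL, Matrix.sub_mulVec, Matrix.mulVec, dotProduct, Matrix.one_apply,
      sub_mul, Finset.sum_sub_distrib, Finset.sum_ite_eq, Matrix.smul_apply, Matrix.smul_apply]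
  have part1 : L *ᵥ v = (N : ℝ) • v := by
    funext i
    rw [hmul]
    simp [hsumv]
  -- Euclidean space setup
  have hinner : ∀ x y : EuclideanSpace ℝ (Fin N), (inner ℝ x y : ℝ) = ∑ i, x i * y i := by
    intro x y
    rw [PiLp.inner_apply]
    simp [RCLike.inner_apply, mul_comm]
  set u : EuclideanSpace ℝ (Fin N) := WithLp.toLp 2 (fun _ => 1 / Real.sqrt N) with hu
  have hsqrtN : Real.sqrt N * Real.sqrt N = N := Real.mul_self_sqrt hN0.le
  have hsqrtN0 : Real.sqrt N ≠ 0 := by positivity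
  have hsumu : (∑ _j : Fin N, (1 / Real.sqrt N)) = Real.sqrt N := by
    rw [Finset.sum_const]
    simp only [Finset.card_univ, Fintype.card_fin, nsmul_eq_mul]
    field_simp
    rw [sq, hsqrtN]
  have huu : (inner ℝ u u : ℝ) = 1 := by
    rw [hinner]
    show (∑ _i : Fin N, (1 / Real.sqrt N) * (1 / Real.sqrt N)) = 1
    rw [Finset.sum_const]
    simp only [Finset.card_univ, Fintype.card_fin, nsmul_eq_mul]
    rw [div_mul_div_comm, one_mul, hsqrtN]
    field_simp
  have huv : (inner ℝ u (show EuclideanSpace ℝ (Fin N) from WithLp.toLp 2 v) : ℝ) = 0 := by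
    rw [hinner]
    show (∑ i, (1 / Real.sqrt N) * v i) = 0
    rw [← Finset.mul_sum, hsumv, mul_zero]
  have hvv : (inner ℝ (show EuclideanSpace ℝ (Fin N) from WithLp.toLp 2 v) (show EuclideanSpace ℝ (Fin N) from WithLp.toLp 2 v) : ℝ) = 1 := by
    rw [hinner]
    show (∑ i, v i * v i) = 1
    have key : ∀ i, v i * v i = if i = i0 then c * c else if i = i1 then c * c else 0 := by
      intro i
      rw [hvdef i]
      by_cases h0 : i = i0 <;> by_cases h1 : i = i1 <;> simp_all
    rw [Finset.sum_congr rfl fun i _ => key i, hsum2, hcc]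
    norm_num
  -- orthonormal family on {i0, i1}
  set w : Fin N → EuclideanSpace ℝ (Fin N) := fun i => if i = i0 then u else (show EuclideanSpace ℝ (Fin N) from WithLp.toLp 2 v) with hw
  have hwon : Orthonormal ℝ (Set.restrict {i0, i1} w) := by
    rw [orthonormal_iff_ite]
    rintro ⟨i, hi⟩ ⟨j, hj⟩
    simp only [Set.mem_insert_iff, Set.mem_singleton_iff] at hi hj
    have hsymm : (inner ℝ (show EuclideanSpace ℝ (Fin N) from WithLp.toLp 2 v) u : ℝ) = 0 := by
      rw [real_inner_comm]; exact huv
    rcases hi with rfl | rfl <;> rcases hj with rfl | rfl <;>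
      simp_all [Set.restrict, hw, Subtype.ext_iff, hne, hne.symm]
  obtain ⟨b, hb⟩ := hwon.exists_orthonormalBasis_extension_of_card_eq
    (by simp [finrank_euclideanSpace])
  have hb0 : b i0 = u := by
    have := hb i0 (by simp); simpa [hw] using this
  have hb1 : b i1 = (show EuclideanSpace ℝ (Fin N) from WithLp.toLp 2 v) := by
    have := hb i1 (by simp); rw [this]; simp [hw, hne.symm]
  have hbon : ∀ j k, (∑ i, b j i * b k i) = if j = k then 1 else 0 := by
    intro j k
    rw [← hinner]
    exact orthonormal_iff_ite.mp b.orthonormal j k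
  -- sum of entries of b k for k ≠ i0
  have hsumb : ∀ k, k ≠ i0 → (∑ j, b k j) = 0 := by
    intro k hk
    have h := orthonormal_iff_ite.mp b.orthonormal i0 k
    rw [if_neg (fun h' => hk h'.symm), hinner, hb0] at h
    have key : ∀ i, u i * b k i = (1 / Real.sqrt N) * b k i := fun i => rfl
    rw [Finset.sum_congr rfl fun i _ => key i, ← Finset.mul_sum] at h
    have h1N : (1 / Real.sqrt N) ≠ 0 := by positivity
    exact (mul_eq_zero.mp h).resolve_left h1N
  set lam : Fin N → ℝ := fun k => if k = i0 then 0 else N with hlam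
  have hLrow : ∀ (x : Fin N → ℝ) (i : Fin N),
      (∑ m, L i m * x m) = (N : ℝ) * x i - ∑ m, x m := by
    intro x i
    simp [hL, Matrix.sub_apply, Matrix.one_apply, sub_mul, Finset.sum_sub_distrib,
      Finset.sum_ite_eq, Matrix.smul_apply, smul_eq_mul]
  have hLb : ∀ k i, (∑ m, L i m * b k m) = lam k * b k i := by
    intro k i
    rw [hLrow (fun m => b k m) i]
    by_cases hk : k = i0
    · subst hk
      simp only [hlam, if_pos rfl, zero_mul]
      rw [hb0]
      show (N : ℝ) * (1 / Real.sqrt N) - (∑ _j : Fin N, (1 / Real.sqrt N)) = 0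
      rw [hsumu, mul_one_div, sub_eq_zero, div_eq_iff hsqrtN0, hsqrtN]
    · rw [hsumb k hk]
      simp [hlam, hk]
  refine ⟨part1, ⟨Matrix.of fun i j => b j i, lam, ?_, ?_, ?_⟩, ?_, by omega⟩
  · ext j k
    simp only [Matrix.mul_apply, Matrix.transpose_apply, Matrix.of_apply, Matrix.one_apply]
    exact hbon j k
  · rw [Matrix.mul_assoc]
    ext j k
    simp only [Matrix.mul_apply, Matrix.transpose_apply, Matrix.of_apply]
    rw [Finset.sum_congr rfl fun i (_ : i ∈ Finset.univ) => by rw [hLb k i]]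
    have key : (∑ i, b j i * (lam k * b k i)) = lam k * ∑ i, b j i * b k i := by
      rw [Finset.mul_sum]; exact Finset.sum_congr rfl fun i _ => by ring
    rw [key, hbon j k, Matrix.diagonal_apply]
    by_cases h : j = k
    · subst h; simp
    · simp [h]
  · funext j
    show (∑ i, b j i * v i) = _
    have key : ∀ i, b j i * v i = b j i * b i1 i := by
      intro i; rw [hb1]
    rw [Finset.sum_congr rfl fun i _ => key i, hbon j i1]
    by_cases h : j = i1
    · rw [if_pos h, if_pos (by simp [h, hi1])]
    · rw [if_neg h, if_neg (by simpa [hi1, Fin.ext_iff] using h)]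
  · have hs1 : (Function.support v) = {i0, i1} := by
      ext i
      simp only [Function.support, Set.mem_setOf_eq, Set.mem_insert_iff, Set.mem_singleton_iff]
      rw [hvdef i]
      by_cases h0 : i = i0
      · simp [h0, hc0]
      · by_cases h1 : i = i1
        · subst h1
          rw [if_neg (Ne.symm hne), if_pos rfl]
          simp [hc0]
        · simp [h0, h1]
    have hs2 : (Function.support fun i : Fin N => if (i : ℕ) = 1 then (1:ℝ) else 0) = {i1} := by
      ext i
      simp [Function.support, hi1, Fin.ext_iff]
    rw [show (Function.support fun i : Fin N => if (i : ℕ) = 0 then 1 / Real.sqrt 2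
        else if (i : ℕ) = 1 then -(1 / Real.sqrt 2) else 0) = Function.support v from rfl,
      hs1, hs2, Set.ncard_pair hne, Set.ncard_singleton]
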